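/- Grade ℂ[X,Y] by declaring a monomial XᵐYⁿ even or odd according to the parity of m+n, and grade M₂(ℂ[X]) by letting (M₂(ℂ[X]))₀ consist of matrices with even polynomials on the diagonal and odd polynomials off the diagonal. Then the even part of the ℤ/2ℤ-graded tensor product M₂(ℂ[X]) ⊗ M₂(ℂ[Y]) is isomorphic as a ℂ-algebra to M₄(ℂ[X,Y])₀, where M₄(ℂ[X,Y])₀ consists of 4×4 matrices whose 2×2 diagonal blocks have entries in ℂ[X,Y]₀ (even polynomials) and whose 2×2 off-diagonal blocks have entries in ℂ[X,Y]₁ (odd polynomials). -/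

import Mathlib

open MvPolynomial

/-- Conjugation `x ↦ D x D` by a square root of one, as an algebra homomorphism
(note `D⁻¹ = D`). -/
def conjAlgHom {R A : Type*} [CommSemiring R] [Ring A] [Algebra R A]
    (D : A) (hD : D * D = 1) : A →ₐ[R] A where
  toFun x := D * x * D
  map_one' := by show D * 1 * D = 1; rw [mul_one, hD]
  map_mul' x y := by
    simp only [mul_assoc]
    rw [← mul_assoc D D, hD, one_mul]
  map_zero' := by simp
  map_add' x y := by simp [mul_add, add_mul]
  commutes' r := by
    show D * algebraMap R A r * D = algebraMap R A r
    rw [← Algebra.commutes r D, mul_assoc, hD, mul_one]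

/-- `D = diag(1,−1)` in `M₂(ℂ[X])`. -/
noncomputable def D2 : Matrix (Fin 2) (Fin 2) (Polynomial ℂ) :=
  Matrix.diagonal ![1, -1]

theorem D2_sq : D2 * D2 = 1 := by
  rw [D2, Matrix.diagonal_mul_diagonal]
  have h : (fun i => ![(1 : Polynomial ℂ), -1] i * ![(1 : Polynomial ℂ), -1] i)
      = fun _ => (1 : Polynomial ℂ) := by
    funext i; fin_cases i <;> norm_num
  rw [h, Matrix.diagonal_one]

/-- The grading involution of `M₂(ℂ[X])`: `P(X) ↦ D · P(−X) · D⁻¹` with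
`D = diag(1,−1)`.  Its fixed algebra is `(M₂(ℂ[X]))₀`: even polynomials on the
diagonal and odd polynomials off the diagonal. -/
noncomputable def epsOne : Matrix (Fin 2) (Fin 2) (Polynomial ℂ) →ₐ[ℂ]
    Matrix (Fin 2) (Fin 2) (Polynomial ℂ) :=
  (conjAlgHom D2 D2_sq).comp
    (AlgHom.mapMatrix (Polynomial.aeval (-(Polynomial.X : Polynomial ℂ))))

/-- `D₄ = diag(1,1,−1,−1)` in `M₄(ℂ[X,Y])`. -/
noncomputable def D4 : Matrix (Fin 4) (Fin 4) (MvPolynomial (Fin 2) ℂ) :=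
  Matrix.diagonal ![1, 1, -1, -1]

theorem D4_sq : D4 * D4 = 1 := by
  rw [D4, Matrix.diagonal_mul_diagonal]
  have h : (fun i => ![(1 : MvPolynomial (Fin 2) ℂ), 1, -1, -1] i *
        ![(1 : MvPolynomial (Fin 2) ℂ), 1, -1, -1] i)
      = fun _ => (1 : MvPolynomial (Fin 2) ℂ) := by
    funext i; fin_cases i <;> norm_num
  rw [h, Matrix.diagonal_one]

/-- The grading involution of `M₄(ℂ[X,Y])`: `P(X,Y) ↦ D₄ · P(−X,−Y) · D₄⁻¹`.  Its
fixed algebra is `M₄(ℂ[X,Y])₀`: even polynomials in the two diagonal `2×2` blocks,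
odd polynomials in the two off-diagonal `2×2` blocks. -/
noncomputable def epsFour : Matrix (Fin 4) (Fin 4) (MvPolynomial (Fin 2) ℂ) →ₐ[ℂ]
    Matrix (Fin 4) (Fin 4) (MvPolynomial (Fin 2) ℂ) :=
  (conjAlgHom D4 D4_sq).comp
    (AlgHom.mapMatrix (MvPolynomial.aeval (fun i => -(MvPolynomial.X i))))


open Matrix TensorProduct

abbrev C2 := MvPolynomial (Fin 2) ℂ
abbrev PX := Polynomial ℂ
abbrev M2 (R : Type) := Matrix (Fin 2) (Fin 2) R
abbrev M4 (R : Type) := Matrix (Fin 4) (Fin 4) R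

/-- index identification -/
def sg : Fin 2 × Fin 2 ≃ Fin 4 where
  toFun p := ![![0,2],![3,1]] p.1 p.2
  invFun k := ![((0:Fin 2),(0:Fin 2)),(1,1),(0,1),(1,0)] k
  left_inv := by decide
  right_inv := by decide

lemma stdBasisMatrix_map {α β : Type*} [Zero α] [Zero β] {n m : Type*} [DecidableEq n] [DecidableEq m]
    {i : n} {j : m} {c : α} {f : α → β} (h0 : f 0 = 0) :
    (Matrix.single i j c).map f = Matrix.single i j (f c) := by
  ext a b
  simp only [Matrix.map_apply, Matrix.single, of_apply]
  split_ifs <;> simp [h0]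

noncomputable def pe : (PX ⊗[ℂ] PX) ≃ₐ[ℂ] C2 :=
  AlgEquiv.ofAlgHom
    (Algebra.TensorProduct.lift (Polynomial.aeval (X 0)) (Polynomial.aeval (X 1))
      (fun _ _ => Commute.all _ _))
    (aeval ![(Polynomial.X : PX) ⊗ₜ[ℂ] 1, 1 ⊗ₜ[ℂ] Polynomial.X])
    (by apply MvPolynomial.algHom_ext; intro i; fin_cases i <;> simp)
    (by
      apply Algebra.TensorProduct.ext <;> apply Polynomial.algHom_ext <;> simp)

lemma pe_tmul (p q : PX) :
    pe (p ⊗ₜ[ℂ] q) = Polynomial.aeval (X (0:Fin 2)) p * Polynomial.aeval (X 1) q := by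
  simp [pe]

noncomputable def mm : (M2 ℂ ⊗[ℂ] M2 ℂ) ≃ₐ[ℂ] M4 ℂ :=
  (matrixEquivTensor (Fin 2) ℂ (M2 ℂ)).symm.trans
    ((Matrix.compAlgEquiv (Fin 2) (Fin 2) ℂ ℂ).trans (Matrix.reindexAlgEquiv ℂ ℂ sg))

lemma comp_std (i j k l : Fin 2) (x : ℂ) :
    Matrix.compAlgEquiv (Fin 2) (Fin 2) ℂ ℂ (Matrix.single k l (Matrix.single i j x))
      = Matrix.single (k,i) (l,j) x := by
  ext ⟨a,b⟩ ⟨c,d⟩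
  simp only [compAlgEquiv_apply, comp_apply, Matrix.single, of_apply]
  split_ifs <;> aesop

lemma reindex_std (p q : Fin 2 × Fin 2) (x : ℂ) :
    Matrix.reindexAlgEquiv ℂ ℂ sg (Matrix.single p q x) = Matrix.single (sg p) (sg q) x := by
  ext a b
  simp only [reindexAlgEquiv_apply, reindex_apply, submatrix_apply, Matrix.single, of_apply]
  congr 1
  rw [eq_iff_iff]
  constructor
  · rintro ⟨h1, h2⟩
    subst h1; subst h2
    simp
  · rintro ⟨h1, h2⟩
    subst h1; subst h2
    simp

lemma mm_std (i j k l : Fin 2) :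
    mm (Matrix.single i j (1:ℂ) ⊗ₜ[ℂ] Matrix.single k l (1:ℂ))
      = Matrix.single (sg (k,i)) (sg (l,j)) 1 := by
  rw [mm]
  simp only [AlgEquiv.trans_apply, matrixEquivTensor_apply_symm]
  have : Matrix.single i j (1:ℂ) • (Matrix.single k l (1:ℂ)).map
      (algebraMap ℂ (M2 ℂ))
      = Matrix.single k l (Matrix.single i j (1:ℂ)) := by
    rw [stdBasisMatrix_map (by simp)]
    simp
  rw [this, comp_std, reindex_std]

noncomputable def bigE : (M2 PX ⊗[ℂ] M2 PX) ≃ₐ[ℂ] M4 C2 :=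
  (Algebra.TensorProduct.congr (matrixEquivTensor (Fin 2) ℂ PX)
      (matrixEquivTensor (Fin 2) ℂ PX)).trans
    ((Algebra.TensorProduct.tensorTensorTensorComm ℂ ℂ ℂ ℂ PX (M2 ℂ) PX (M2 ℂ)).trans
      ((Algebra.TensorProduct.congr pe mm).trans
        (matrixEquivTensor (Fin 4) ℂ C2).symm))

lemma map_aux (s t : Fin 4) (c : C2) :
    c • (Matrix.single s t (1:ℂ)).map (algebraMap ℂ C2) = Matrix.single s t c := by
  rw [stdBasisMatrix_map (by simp)]
  simp

lemma bigE_tmul (i j k l : Fin 2) (p q : PX) :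
    bigE (Matrix.single i j p ⊗ₜ[ℂ] Matrix.single k l q)
      = Matrix.single (sg (k,i)) (sg (l,j))
          (Polynomial.aeval (X (0:Fin 2)) p * Polynomial.aeval (X 1) q) := by
  rw [bigE]
  simp only [AlgEquiv.trans_apply, Algebra.TensorProduct.congr_apply,
    AlgEquiv.toAlgHom_eq_coe, Algebra.TensorProduct.map_tmul, AlgHom.coe_coe,
    matrixEquivTensor_apply_single,
    Algebra.TensorProduct.tensorTensorTensorComm_tmul, pe_tmul, mm_std,
    matrixEquivTensor_apply_symm, map_aux, AlgEquiv.coe_toAlgHom]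

-- generation of M2 R by diagonal X and matrix units
def genS : Set (M2 PX) :=
  {diagonal (fun _ => (Polynomial.X : PX))} ∪ {M | ∃ i j, M = Matrix.single i j 1}

lemma diagonal_mul_std (p : PX) (i j : Fin 2) :
    (diagonal (fun _ => p) : M2 PX) * Matrix.single i j 1 = Matrix.single i j p := by
  ext a b
  rw [diagonal_mul]
  simp only [Matrix.single, of_apply]
  split_ifs <;> simp

lemma adjoin_genS : Algebra.adjoin ℂ genS = ⊤ := by
  rw [eq_top_iff]
  rintro M -
  rw [matrix_eq_sum_single M]
  apply Subalgebra.sum_mem; intro i _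
  apply Subalgebra.sum_mem; intro j _
  have hdiag : ∀ p : PX, (diagonal (fun _ => p) : M2 PX) ∈ Algebra.adjoin ℂ genS := by
    intro p
    have hφ : ∀ q : PX, (IsScalarTower.toAlgHom ℂ PX (M2 PX)) q = diagonal (fun _ => q) := by
      intro q
      simp [IsScalarTower.toAlgHom_apply, Matrix.algebraMap_eq_diagonal]
    have hp : p ∈ Algebra.adjoin ℂ ({Polynomial.X} : Set PX) := by
      rw [Polynomial.adjoin_X]; trivial
    have := Algebra.adjoin_mono (R := ℂ)
      (show ({(IsScalarTower.toAlgHom ℂ PX (M2 PX)) Polynomial.X} : Set (M2 PX)) ⊆ genS by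
        rw [hφ Polynomial.X]; intro x hx; exact Or.inl hx)
    have hmem : (IsScalarTower.toAlgHom ℂ PX (M2 PX)) p ∈
        (Algebra.adjoin ℂ ({Polynomial.X} : Set PX)).map (IsScalarTower.toAlgHom ℂ PX (M2 PX)) :=
      Subalgebra.mem_map.2 ⟨p, hp, rfl⟩
    rw [AlgHom.map_adjoin_singleton] at hmem
    rw [← hφ p]
    exact this hmem
  have hstd : (Matrix.single i j (1:PX)) ∈ Algebra.adjoin ℂ genS :=
    Algebra.subset_adjoin (Or.inr ⟨i, j, rfl⟩)
  rw [← diagonal_mul_std (M i j) i j]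
  exact mul_mem (hdiag _) hstd


@[simp] lemma sg00 : sg ((0:Fin 2),(0:Fin 2)) = 0 := rfl
@[simp] lemma sg00' : sg 0 = 0 := rfl
@[simp] lemma sg11' : sg 1 = 1 := rfl
@[simp] lemma sg01 : sg ((0:Fin 2),(1:Fin 2)) = 2 := rfl
@[simp] lemma sg10 : sg ((1:Fin 2),(0:Fin 2)) = 3 := rfl
@[simp] lemma sg11 : sg ((1:Fin 2),(1:Fin 2)) = 1 := rfl

lemma D2_conj_std (i j : Fin 2) (x : PX) :
    D2 * Matrix.single i j x * D2 = Matrix.single i j (![1,-1] i * ![1,-1] j * x) := by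
  ext a b
  rw [D2, mul_diagonal, diagonal_mul]
  simp only [Matrix.single, of_apply]
  split_ifs with h
  · obtain ⟨rfl, rfl⟩ := h; ring
  · simp

lemma epsOne_std (i j : Fin 2) (x : PX) :
    epsOne (Matrix.single i j x)
      = Matrix.single i j (![1,-1] i * ![1,-1] j * Polynomial.aeval (-(Polynomial.X:PX)) x) := by
  rw [epsOne, AlgHom.comp_apply, AlgHom.mapMatrix_apply, stdBasisMatrix_map (by simp)]
  show D2 * _ * D2 = _
  rw [D2_conj_std]

lemma D4_conj_std (i j : Fin 4) (x : C2) :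
    D4 * Matrix.single i j x * D4 = Matrix.single i j (![1,1,-1,-1] i * ![1,1,-1,-1] j * x) := by
  ext a b
  rw [D4, mul_diagonal, diagonal_mul]
  simp only [Matrix.single, of_apply]
  split_ifs with h
  · obtain ⟨rfl, rfl⟩ := h; ring
  · simp

lemma epsFour_std (i j : Fin 4) (x : C2) :
    epsFour (Matrix.single i j x)
      = Matrix.single i j (![1,1,-1,-1] i * ![1,1,-1,-1] j * aeval (fun v => -(X v : C2)) x) := by
  rw [epsFour, AlgHom.comp_apply, AlgHom.mapMatrix_apply, stdBasisMatrix_map (by simp)]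
  show D4 * _ * D4 = _
  rw [D4_conj_std]

lemma epsOne_diag :
    epsOne (diagonal fun _ => (Polynomial.X : PX)) = diagonal (fun _ => -(Polynomial.X : PX)) := by
  rw [epsOne, AlgHom.comp_apply, AlgHom.mapMatrix_apply, diagonal_map (by simp)]
  show D2 * _ * D2 = _
  rw [D2, diagonal_mul_diagonal, diagonal_mul_diagonal]
  ext a b
  fin_cases a <;> fin_cases b <;> simp [Matrix.diagonal_apply] <;> ring

lemma epsFour_diag (v : Fin 2) :
    epsFour (diagonal fun _ => (X v : C2)) = diagonal (fun _ => -(X v : C2)) := by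
  rw [epsFour, AlgHom.comp_apply, AlgHom.mapMatrix_apply, diagonal_map (by simp)]
  show D4 * _ * D4 = _
  rw [D4, diagonal_mul_diagonal, diagonal_mul_diagonal]
  ext a b
  fin_cases a <;> fin_cases b <;> simp [Matrix.diagonal_apply] <;> ring

lemma one_eq_M2 : (1 : M2 PX) = Matrix.single 0 0 1 + Matrix.single 1 1 1 := by
  ext a b
  fin_cases a <;> fin_cases b <;> simp [Matrix.single, one_apply]

lemma diag_eq_M2 (p : PX) :
    (diagonal (fun _ => p) : M2 PX) = Matrix.single 0 0 p + Matrix.single 1 1 p := by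
  ext a b
  fin_cases a <;> fin_cases b <;> simp [Matrix.single, diagonal]

lemma bigE_std_left (i j : Fin 2) (p : PX) :
    bigE (Matrix.single i j p ⊗ₜ[ℂ] (1 : M2 PX))
      = Matrix.single (sg (0,i)) (sg (0,j)) (Polynomial.aeval (X (0:Fin 2)) p)
        + Matrix.single (sg (1,i)) (sg (1,j)) (Polynomial.aeval (X (0:Fin 2)) p) := by
  rw [one_eq_M2]
  simp [tmul_add, bigE_tmul]

lemma bigE_std_right (k l : Fin 2) (q : PX) :
    bigE ((1 : M2 PX) ⊗ₜ[ℂ] Matrix.single k l q)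
      = Matrix.single (sg (k,0)) (sg (l,0)) (Polynomial.aeval (X (1:Fin 2)) q)
        + Matrix.single (sg (k,1)) (sg (l,1)) (Polynomial.aeval (X (1:Fin 2)) q) := by
  rw [one_eq_M2]
  simp [add_tmul, bigE_tmul]

lemma bigE_diag_left (p : PX) :
    bigE ((diagonal fun _ => p) ⊗ₜ[ℂ] (1 : M2 PX))
      = diagonal (fun _ => (Polynomial.aeval (X (0:Fin 2)) p : C2)) := by
  rw [diag_eq_M2, add_tmul, map_add, bigE_std_left, bigE_std_left]
  ext a b
  fin_cases a <;> fin_cases b <;> simp [Matrix.single, diagonal]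

lemma bigE_diag_right (q : PX) :
    bigE ((1 : M2 PX) ⊗ₜ[ℂ] (diagonal fun _ => q))
      = diagonal (fun _ => (Polynomial.aeval (X (1:Fin 2)) q : C2)) := by
  rw [diag_eq_M2, tmul_add, map_add, bigE_std_right, bigE_std_right]
  ext a b
  fin_cases a <;> fin_cases b <;> simp [Matrix.single, diagonal]

lemma epsOne_one : epsOne 1 = 1 := map_one _

theorem key :
    epsFour.comp bigE.toAlgHom
      = bigE.toAlgHom.comp (Algebra.TensorProduct.map epsOne epsOne) := by
  apply Algebra.TensorProduct.ext
  · apply AlgHom.ext_of_adjoin_eq_top adjoin_genS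
    rintro M (rfl | ⟨i, j, rfl⟩)
    · simp only [AlgHom.comp_apply, Algebra.TensorProduct.includeLeft_apply,
        AlgEquiv.toAlgHom_eq_coe, AlgHom.coe_coe, Algebra.TensorProduct.map_tmul,
        epsOne_diag, epsOne_one, bigE_diag_left]
      simp [epsFour_diag, bigE_diag_left, epsOne_diag]
    · simp only [AlgHom.comp_apply, Algebra.TensorProduct.includeLeft_apply,
        AlgEquiv.toAlgHom_eq_coe, AlgHom.coe_coe, Algebra.TensorProduct.map_tmul,
        epsOne_std, epsOne_one, bigE_std_left, map_add, epsFour_std]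
      fin_cases i <;> fin_cases j <;>
        simp [bigE_std_left, epsOne_std, epsFour_std] <;> norm_num
  · apply AlgHom.ext_of_adjoin_eq_top adjoin_genS
    rintro M (rfl | ⟨i, j, rfl⟩)
    · simp only [AlgHom.comp_apply, Algebra.TensorProduct.includeRight_apply,
        AlgEquiv.toAlgHom_eq_coe, AlgHom.coe_coe, Algebra.TensorProduct.map_tmul,
        epsOne_diag, epsOne_one, bigE_diag_right]
      simp [epsFour_diag, bigE_diag_right, epsOne_diag]
    · simp only [AlgHom.comp_apply, Algebra.TensorProduct.includeRight_apply,
        AlgEquiv.toAlgHom_eq_coe, AlgHom.coe_coe, Algebra.TensorProduct.map_tmul,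
        epsOne_std, epsOne_one, bigE_std_right, map_add, epsFour_std]
      fin_cases i <;> fin_cases j <;>
        simp [bigE_std_right, epsOne_std, epsFour_std] <;> norm_num


/-- An algebra isomorphism intertwining two endomorphisms induces an isomorphism of
the corresponding equalizer (fixed-point) subalgebras. -/
noncomputable def equalizerCongr {R A B : Type*} [CommSemiring R] [Semiring A] [Semiring B]
    [Algebra R A] [Algebra R B] (e : A ≃ₐ[R] B) (f : A →ₐ[R] A) (g : B →ₐ[R] B)
    (h : g.comp e.toAlgHom = e.toAlgHom.comp f) :
    AlgHom.equalizer f (AlgHom.id R A) ≃ₐ[R] AlgHom.equalizer g (AlgHom.id R B) where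
  toFun x := ⟨e x.1, by
    have hc := AlgHom.congr_fun h x.1
    simp only [AlgHom.comp_apply, AlgEquiv.toAlgHom_eq_coe, AlgHom.coe_coe, AlgEquiv.coe_toAlgHom] at hc
    have hx : f x.1 = x.1 := x.2
    show g (e x.1) = AlgHom.id R B (e x.1)
    rw [hc, hx, AlgHom.id_apply]⟩
  invFun y := ⟨e.symm y.1, by
    have hc := AlgHom.congr_fun h (e.symm y.1)
    simp only [AlgHom.comp_apply, AlgEquiv.toAlgHom_eq_coe, AlgHom.coe_coe,
      AlgEquiv.apply_symm_apply, AlgEquiv.coe_toAlgHom] at hc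
    have hy : g y.1 = y.1 := y.2
    show f (e.symm y.1) = AlgHom.id R A (e.symm y.1)
    rw [AlgHom.id_apply]
    have : e (f (e.symm y.1)) = e (e.symm y.1) := by
      rw [← hc, hy, AlgEquiv.apply_symm_apply]
    exact e.injective this⟩
  left_inv x := Subtype.ext (e.symm_apply_apply x.1)
  right_inv y := Subtype.ext (e.apply_symm_apply y.1)
  map_mul' x y := Subtype.ext (map_mul e x.1 y.1)
  map_add' x y := Subtype.ext (map_add e x.1 y.1)
  commutes' r := Subtype.ext (e.commutes r)

/-- The even part of the `ℤ/2ℤ`-graded tensor product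
`M₂(ℂ[X]) ⊗ M₂(ℂ[Y])` — realized as the fixed subalgebra of the grading involution
`ε₁ ⊗ ε₂` — is isomorphic as a `ℂ`-algebra to `M₄(ℂ[X,Y])₀`, the fixed subalgebra of
the grading involution of `M₄(ℂ[X,Y])`, which consists of the `4×4` matrices whose
`2×2` diagonal blocks have even entries and whose `2×2` off-diagonal blocks have odd
entries. -/
theorem even_tensor_iso_even_M4 :
    Nonempty
      (AlgHom.equalizer (Algebra.TensorProduct.map epsOne epsOne) (AlgHom.id ℂ _)
        ≃ₐ[ℂ] AlgHom.equalizer epsFour (AlgHom.id ℂ _)) := by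
  exact ⟨equalizerCongr bigE (Algebra.TensorProduct.map epsOne epsOne) epsFour key⟩
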